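/- Let G and H be transitively closed episodes such that the labels of the events of G are pairwise distinct, each label of an event of G occurs on exactly one event of H, and let π be the unique label-preserving map from the events of G to the events of H. Then G ⪯ H if and only if for all episode events e and f of G: (1) node(e) = node(f) implies node(π(e)) = node(π(f)); (2) if node(e) is a proper child of node(f) then node(π(e)) is a proper child of node(π(f)); and (3) if node(e) is a child of node(f) then node(π(e)) is a child of node(π(f)) or node(π(e)) = node(π(f)). -/

import Mathlib

/-- A sequence event: a unique id, a label (from alphabet encoded as `ℕ`),
and an integer time stamp. -/
structure SeqEvent where
  id : ℕ
  lab : ℕ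
  ts : ℤ
deriving DecidableEq

/-- An event sequence: a finite collection of sequence events with distinct ids,
whose time stamps are monotone in the ids. -/
structure EventSeq where
  events : Finset SeqEvent
  id_inj : ∀ e ∈ events, ∀ f ∈ events, e.id = f.id → e = f
  ts_mono : ∀ e ∈ events, ∀ f ∈ events, e.id ≤ f.id → e.ts ≤ f.ts

/-- An episode: a finite set of episode events (identified by ids in `ℕ`) with labels,
a finite set of graph nodes, a map from events to nodes (surjectivity and the DAG
property are recorded in `Episode.WellFormed`), and weak and proper edges. -/
structure Episode where
  events : Finset ℕ
  lab : ℕ → ℕ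
  nodes : Finset ℕ
  node : ℕ → ℕ
  weak : ℕ → ℕ → Prop
  proper : ℕ → ℕ → Prop

namespace Episode

/-- An edge of the episode graph (weak or proper). -/
def edge (G : Episode) (a b : ℕ) : Prop := G.weak a b ∨ G.proper a b

/-- `G.Desc m n` : `n` is a descendant of `m`, i.e. there is a directed path from `m` to `n`. -/
def Desc (G : Episode) (m n : ℕ) : Prop := Relation.TransGen G.edge m n

/-- `G.PDesc m n` : `n` is a proper descendant of `m`, i.e. some directed path
from `m` to `n` contains a proper edge. -/
def PDesc (G : Episode) (m n : ℕ) : Prop :=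
  ∃ a b, Relation.ReflTransGen G.edge m a ∧ G.proper a b ∧ Relation.ReflTransGen G.edge b n

/-- Well-formedness of an episode: events map into the nodes, every node carries an
event, edges run between nodes, the weak and proper edges are disjoint, and the
graph is acyclic (a DAG). -/
structure WellFormed (G : Episode) : Prop where
  node_mem : ∀ e ∈ G.events, G.node e ∈ G.nodes
  node_surj : ∀ n ∈ G.nodes, ∃ e ∈ G.events, G.node e = n
  weak_mem : ∀ a b, G.weak a b → a ∈ G.nodes ∧ b ∈ G.nodes
  proper_mem : ∀ a b, G.proper a b → a ∈ G.nodes ∧ b ∈ G.nodes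
  weak_proper_disjoint : ∀ a b, G.weak a b → G.proper a b → False
  acyclic : ∀ n, ¬ G.Desc n n

/-- The transitive closure of an episode: add an edge from every node to each of its
descendants, proper if the descendant is a proper descendant, weak otherwise. -/
def tcl (G : Episode) : Episode :=
  { G with
    proper := fun a b => G.PDesc a b
    weak := fun a b => G.Desc a b ∧ ¬ G.PDesc a b }

/-- An episode is transitively closed if it coincides with its transitive closure. -/
def TransClosed (G : Episode) : Prop :=
  (∀ a b, G.proper a b ↔ G.PDesc a b) ∧
  (∀ a b, G.weak a b ↔ (G.Desc a b ∧ ¬ G.PDesc a b))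

end Episode

/-- `m` is a coverage mapping of episode `G` into sequence `s`: an injective map from
the episode events into the sequence events preserving labels, mapping events of one
node to a common time stamp, and respecting weak and proper edges. -/
def IsCoverMap (s : EventSeq) (G : Episode) (m : ℕ → SeqEvent) : Prop :=
  (∀ e ∈ G.events, m e ∈ s.events) ∧
  Set.InjOn m ↑G.events ∧
  (∀ e ∈ G.events, (m e).lab = G.lab e) ∧
  (∀ e ∈ G.events, ∀ f ∈ G.events, G.node e = G.node f → (m e).ts = (m f).ts) ∧
  (∀ e ∈ G.events, ∀ f ∈ G.events, G.Desc (G.node f) (G.node e) → (m f).ts ≤ (m e).ts) ∧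
  (∀ e ∈ G.events, ∀ f ∈ G.events, G.PDesc (G.node f) (G.node e) → (m f).ts < (m e).ts)

/-- A sequence `s` covers an episode `G`. -/
def Covers (s : EventSeq) (G : Episode) : Prop := ∃ m, IsCoverMap s G m

/-- `G ⪯ H` : every sequence covering `H` also covers `G`. -/
def Subepisode (G H : Episode) : Prop := ∀ s : EventSeq, Covers s H → Covers s G

/-- `G ∼ H` : `G ⪯ H` and `H ⪯ G`. -/
def EpisodeSimilar (G H : Episode) : Prop := Subepisode G H ∧ Subepisode H G

/-- The window `s[i, j]`: the subsequence of events with time stamps in `[i, j]`. -/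
def EventSeq.window (s : EventSeq) (i j : ℤ) : EventSeq where
  events := s.events.filter (fun e => i ≤ e.ts ∧ e.ts ≤ j)
  id_inj := fun e he f hf h =>
    s.id_inj e (Finset.mem_filter.mp he).1 f (Finset.mem_filter.mp hf).1 h
  ts_mono := fun e he f hf h =>
    s.ts_mono e (Finset.mem_filter.mp he).1 f (Finset.mem_filter.mp hf).1 h

/-- The support `fr(G; s)` with window size `ρ`: the number of integers `t` such that
the window `s[t, t + ρ - 1]` covers `G` (as an extended natural number). -/
noncomputable def support (ρ : ℤ) (s : EventSeq) (G : Episode) : ℕ∞ :=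
  {t : ℤ | Covers (s.window t (t + ρ - 1)) G}.encard

/-- `first(i)` : the smallest time stamp in the range of the instance. -/
noncomputable def instFirst (G : Episode) (m : ℕ → SeqEvent) : ℤ :=
  sInf ((fun e => (m e).ts) '' ↑G.events)

/-- `last(i)` : the largest time stamp in the range of the instance. -/
noncomputable def instLast (G : Episode) (m : ℕ → SeqEvent) : ℤ :=
  sSup ((fun e => (m e).ts) '' ↑G.events)

/-- `m` is an instance of `G` in `s` (with window size `ρ`): a coverage mapping of `G`
into `s` such that no used sequence event can be replaced by an unused one with the same
label, the same time stamp and a smaller id, and whose span is less than `ρ`. -/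
def IsInstance (ρ : ℤ) (s : EventSeq) (G : Episode) (m : ℕ → SeqEvent) : Prop :=
  IsCoverMap s G m ∧
  (∀ e ∈ G.events, ∀ f ∈ s.events, (∀ e' ∈ G.events, m e' ≠ f) →
      f.lab = (m e).lab → f.ts = (m e).ts → ¬ f.id < (m e).id) ∧
  instLast G m - instFirst G m ≤ ρ - 1

section Aux

open Episode

variable {E : Episode}

lemma aux_edge_mem (h : E.WellFormed) {a b : ℕ} (hab : E.edge a b) :
    a ∈ E.nodes ∧ b ∈ E.nodes := hab.elim (h.weak_mem a b) (h.proper_mem a b)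

lemma aux_desc_mem (h : E.WellFormed) {a b : ℕ} (hab : E.Desc a b) :
    a ∈ E.nodes ∧ b ∈ E.nodes := by
  induction hab with
  | single h1 => exact aux_edge_mem h h1
  | tail _ h2 ih => exact ⟨ih.1, (aux_edge_mem h h2).2⟩

lemma aux_desc_trans {a b c : ℕ} (h1 : E.Desc a b) (h2 : E.Desc b c) : E.Desc a c :=
  Relation.TransGen.trans h1 h2

lemma aux_pdesc_desc {a b : ℕ} (h : E.PDesc a b) : E.Desc a b := by
  obtain ⟨x, y, h1, h2, h3⟩ := h
  exact Relation.TransGen.trans_right h1 (Relation.TransGen.head' (Or.inr h2) h3)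

lemma aux_desc_pdesc_left {a m n : ℕ} (h1 : E.Desc a m) (h2 : E.PDesc m n) :
    E.PDesc a n := by
  obtain ⟨x, y, hx, hp, hy⟩ := h2
  exact ⟨x, y, (h1.to_reflTransGen).trans hx, hp, hy⟩

lemma aux_desc_pdesc_right {m n b : ℕ} (h1 : E.PDesc m n) (h2 : E.Desc n b) :
    E.PDesc m b := by
  obtain ⟨x, y, hx, hp, hy⟩ := h1
  exact ⟨x, y, hx, hp, hy.trans h2.to_reflTransGen⟩

/-- `t` is compatible with the episode order: weak descendants take nonstrictly
larger values, proper descendants strictly larger values. -/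
def AuxCompat (E : Episode) (t : ℕ → ℕ) : Prop :=
  (∀ m n, E.Desc m n → t m ≤ t n) ∧ (∀ m n, E.PDesc m n → t m < t n)

lemma aux_compat_of_strict {t : ℕ → ℕ} (hs : ∀ m n, E.Desc m n → t m < t n) :
    AuxCompat E t :=
  ⟨fun m n h => (hs m n h).le, fun m n h => hs m n (aux_pdesc_desc h)⟩

open Classical in
/-- A canonical strictly compatible height function. -/
noncomputable def auxHt (E : Episode) (n : ℕ) : ℕ :=
  (E.nodes.filter (fun m => E.Desc m n)).card

open Classical in
lemma auxHt_strict (h : E.WellFormed) {m n : ℕ} (hmn : E.Desc m n) :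
    auxHt E m < auxHt E n := by
  classical
  apply Finset.card_lt_card
  have hsub : E.nodes.filter (fun k => E.Desc k m) ⊆ E.nodes.filter (fun k => E.Desc k n) := by
    intro k hk
    simp only [Finset.mem_filter] at hk ⊢
    exact ⟨hk.1, aux_desc_trans hk.2 hmn⟩
  rw [Finset.ssubset_iff_of_subset hsub]
  refine ⟨m, ?_, ?_⟩
  · simp only [Finset.mem_filter]
    exact ⟨(aux_desc_mem h hmn).1, hmn⟩
  · simp only [Finset.mem_filter, not_and]
    exact fun _ hd => h.acyclic m hd

lemma auxHt_compat (h : E.WellFormed) : AuxCompat E (auxHt E) :=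
  aux_compat_of_strict (fun _ _ hd => auxHt_strict h hd)

/-- Shifted compatible function separating an incomparable pair. -/
lemma aux_shift_exists (h : E.WellFormed) {a b : ℕ} (hne : a ≠ b) (hnd : ¬ E.Desc a b) :
    ∃ t, AuxCompat E t ∧ t b < t a := by
  classical
  set K := E.nodes.card + 1 with hK
  refine ⟨fun n => auxHt E n + (if n = a ∨ E.Desc a n then K else 0),
    aux_compat_of_strict ?_, ?_⟩
  · intro m n hmn
    have h1 := auxHt_strict h hmn
    by_cases hm : m = a ∨ E.Desc a m
    · have hn : n = a ∨ E.Desc a n := by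
        rcases hm with rfl | hm
        · exact Or.inr hmn
        · exact Or.inr (aux_desc_trans hm hmn)
      simp only [if_pos hm, if_pos hn]
      omega
    · rw [if_neg hm]
      split <;> omega
  · have hb : ¬ (b = a ∨ E.Desc a b) := by
      rintro (rfl | hd)
      · exact hne rfl
      · exact hnd hd
    show auxHt E b + (if b = a ∨ E.Desc a b then K else 0) <
      auxHt E a + (if a = a ∨ E.Desc a a then K else 0)
    rw [if_neg hb, if_pos (Or.inl rfl)]
    have : auxHt E b ≤ E.nodes.card := Finset.card_filter_le _ _
    omega

/-- Collapsing compatible function: identifies the interval between `a` and `b`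
when `b` is a weak (non-proper) descendant of `a`. -/
lemma aux_collapse_exists (h : E.WellFormed) {a b : ℕ} (hd : E.Desc a b)
    (hnp : ¬ E.PDesc a b) : ∃ t, AuxCompat E t ∧ t a = t b := by
  classical
  set Ge : ℕ → Prop := fun n => n = a ∨ E.Desc a n with hGe
  set Le : ℕ → Prop := fun n => n = b ∨ E.Desc n b with hLe
  set I : ℕ → Prop := fun n => Ge n ∧ Le n with hI
  set S : ℕ → ℕ → Prop := fun m n => (E.Desc m n ∨ (Le m ∧ Ge n)) ∧ ¬ (I m ∧ I n) with hS
  set t : ℕ → ℕ := fun n => (E.nodes.filter (fun m => S m n)).card with ht'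
  have hIa : I a := ⟨Or.inl rfl, Or.inr hd⟩
  have hIb : I b := ⟨Or.inr hd, Or.inl rfl⟩
  have hGemono : ∀ {m n}, Ge m → E.Desc m n → Ge n := by
    rintro m n (rfl | hm) hmn
    · exact Or.inr hmn
    · exact Or.inr (aux_desc_trans hm hmn)
  have hLemono : ∀ {m n}, E.Desc m n → Le n → Le m := by
    rintro m n hmn (rfl | hn)
    · exact Or.inr hmn
    · exact Or.inr (aux_desc_trans hmn hn)
  have key1 : ∀ {m n}, I m → I n → t m = t n := by
    have base : ∀ {m}, I m →
        E.nodes.filter (fun k => S k m) = E.nodes.filter (fun k => Le k ∧ ¬ I k) := by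
      intro m hm
      apply Finset.filter_congr
      intro k _
      constructor
      · rintro ⟨hdisj, hni⟩
        refine ⟨?_, fun hk => hni ⟨hk, hm⟩⟩
        rcases hdisj with hkm | ⟨hk, _⟩
        · exact hLemono hkm hm.2
        · exact hk
      · rintro ⟨hk, hni⟩
        exact ⟨Or.inr ⟨hk, hm.1⟩, fun hc => hni hc.1⟩
    intro m n hm hn
    simp only [ht']
    rw [base hm, base hn]
  have key2 : ∀ {m n}, E.Desc m n → ¬ (I m ∧ I n) → t m < t n := by
    intro m n hmn hni
    apply Finset.card_lt_card
    have hsub : E.nodes.filter (fun k => S k m) ⊆ E.nodes.filter (fun k => S k n) := by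
      intro k hk
      simp only [Finset.mem_filter] at hk ⊢
      obtain ⟨hkn, hdisj, hnI⟩ := hk
      refine ⟨hkn, ?_, ?_⟩
      · rcases hdisj with hkm | ⟨hk1, hk2⟩
        · exact Or.inl (aux_desc_trans hkm hmn)
        · exact Or.inr ⟨hk1, hGemono hk2 hmn⟩
      · rintro ⟨hIk, hIn⟩
        have hGm : Ge m := by
          rcases hdisj with hkm | ⟨_, hk2⟩
          · exact hGemono hIk.1 hkm
          · exact hk2
        have hLm : Le m := hLemono hmn hIn.2
        exact hnI ⟨hIk, hGm, hLm⟩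
    rw [Finset.ssubset_iff_of_subset hsub]
    refine ⟨m, ?_, ?_⟩
    · simp only [Finset.mem_filter]
      exact ⟨(aux_desc_mem h hmn).1, Or.inl hmn, hni⟩
    · simp only [Finset.mem_filter, not_and]
      intro _ hmm
      obtain ⟨hdisj, hnI⟩ := hmm
      rcases hdisj with hmmd | ⟨hl, hg⟩
      · exact h.acyclic m hmmd
      · exact hnI ⟨⟨hg, hl⟩, ⟨hg, hl⟩⟩
  have hcomp : ∀ {m n}, I m → I n → E.PDesc m n → False := by
    intro m n hm hn hp
    have h1 : E.PDesc a n := by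
      rcases hm.1 with rfl | hh
      · exact hp
      · exact aux_desc_pdesc_left hh hp
    have h2 : E.PDesc a b := by
      rcases hn.2 with rfl | hh
      · exact h1
      · exact aux_desc_pdesc_right h1 hh
    exact hnp h2
  refine ⟨t, ⟨?_, ?_⟩, key1 hIa hIb⟩
  · intro m n hmn
    by_cases hcase : I m ∧ I n
    · exact (key1 hcase.1 hcase.2).le
    · exact (key2 hmn hcase).le
  · intro m n hp
    refine key2 (aux_pdesc_desc hp) ?_
    rintro ⟨hm, hn⟩
    exact hcomp hm hn hp

/-- The sequence event attached to episode event `f` given timestamps `t` on nodes. -/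
noncomputable def auxEv (E : Episode) (t : ℕ → ℕ) (f : ℕ) : SeqEvent :=
  ⟨t (E.node f) * (E.events.sup id + 1) + f, E.lab f, (t (E.node f) : ℤ)⟩

lemma aux_key_id {x y u v M : ℕ} (hx : x ≤ M) (hy : y ≤ M)
    (h : u * (M + 1) + x = v * (M + 1) + y) : x = y ∧ u = v := by
  have h1 : x = y := by
    have h2 := congrArg (· % (M + 1)) h
    simp only [mul_comm _ (M + 1), Nat.mul_add_mod] at h2
    rwa [Nat.mod_eq_of_lt (Nat.lt_succ_of_le hx), Nat.mod_eq_of_lt (Nat.lt_succ_of_le hy)] at h2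
  subst h1
  exact ⟨rfl, Nat.eq_of_mul_eq_mul_right (by omega : 0 < M + 1) (Nat.add_right_cancel h)⟩

lemma aux_key_mono {x y u v M : ℕ} (hy : y ≤ M)
    (h : u * (M + 1) + x ≤ v * (M + 1) + y) : u ≤ v := by
  by_contra hvu
  push_neg at hvu
  have h1 : (v + 1) * (M + 1) ≤ u * (M + 1) := Nat.mul_le_mul_right _ hvu
  have h2 : (v + 1) * (M + 1) = v * (M + 1) + (M + 1) := by ring
  linarith

/-- The event sequence realizing timestamps `t` on the nodes of `E`. -/
noncomputable def auxSeq (E : Episode) (t : ℕ → ℕ) : EventSeq where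
  events := E.events.image (auxEv E t)
  id_inj := by
    intro e he f hf hid
    simp only [Finset.mem_image] at he hf
    obtain ⟨f1, hf1, rfl⟩ := he
    obtain ⟨f2, hf2, rfl⟩ := hf
    have h1 : f1 ≤ E.events.sup id := Finset.le_sup (f := id) hf1
    have h2 : f2 ≤ E.events.sup id := Finset.le_sup (f := id) hf2
    obtain ⟨h3, -⟩ := aux_key_id h1 h2 hid
    rw [h3]
  ts_mono := by
    intro e he f hf hid
    simp only [Finset.mem_image] at he hf
    obtain ⟨f1, hf1, rfl⟩ := he
    obtain ⟨f2, hf2, rfl⟩ := hf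
    have h2 : f2 ≤ E.events.sup id := Finset.le_sup (f := id) hf2
    show ((t (E.node f1) : ℕ) : ℤ) ≤ ((t (E.node f2) : ℕ) : ℤ)
    exact_mod_cast aux_key_mono h2 hid

lemma aux_mem_auxSeq {E : Episode} {t : ℕ → ℕ} {x : SeqEvent} :
    x ∈ (auxSeq E t).events ↔ ∃ f ∈ E.events, auxEv E t f = x := by
  simp [auxSeq, Finset.mem_image]

lemma auxSeq_covers (h : E.WellFormed) {t : ℕ → ℕ} (hc : AuxCompat E t) :
    Covers (auxSeq E t) E := by
  refine ⟨auxEv E t, ?_, ?_, ?_, ?_, ?_, ?_⟩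
  · intro e he
    exact aux_mem_auxSeq.mpr ⟨e, he, rfl⟩
  · intro e he f hf hef
    have hid := congrArg SeqEvent.id hef
    simp only [auxEv] at hid
    have h1 : e ≤ E.events.sup id := Finset.le_sup (f := id) he
    have h2 : f ≤ E.events.sup id := Finset.le_sup (f := id) hf
    exact (aux_key_id h1 h2 hid).1
  · intro e _; rfl
  · intro e _ f _ hnode
    simp only [auxEv, hnode]
  · intro e _ f _ hd
    show ((t (E.node f) : ℕ) : ℤ) ≤ ((t (E.node e) : ℕ) : ℤ)
    exact_mod_cast hc.1 _ _ hd
  · intro e _ f _ hp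
    show ((t (E.node f) : ℕ) : ℤ) < ((t (E.node e) : ℕ) : ℤ)
    exact_mod_cast hc.2 _ _ hp

end Aux

/-- Theorem 4 of the paper: let `G` and `H` be transitively closed
episodes such that the labels of the events of `G` are pairwise distinct and each label
of an event of `G` occurs on exactly one event of `H`, and let `π` be the unique
label-preserving map from the events of `G` to the events of `H`. Then `G ⪯ H` iff for
all events `e`, `f` of `G`: (1) `node e = node f` implies `node (π e) = node (π f)`;
(2) if `node e` is a proper child (= proper descendant) of `node f` then `node (π e)`
is a proper child of `node (π f)`; (3) if `node e` is a child (= descendant) of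
`node f` then `node (π e)` is a child of `node (π f)` or `node (π e) = node (π f)`. -/
theorem subepisode_iff_of_unique_labels (G H : Episode)
    (hG : G.WellFormed) (hH : H.WellFormed)
    (hGt : G.TransClosed) (hHt : H.TransClosed)
    (hGdist : Set.InjOn G.lab ↑G.events)
    (huniq : ∀ e ∈ G.events, ∃! f, f ∈ H.events ∧ H.lab f = G.lab e)
    (π : ℕ → ℕ)
    (hπ : ∀ e ∈ G.events, π e ∈ H.events ∧ H.lab (π e) = G.lab e) :
    Subepisode G H ↔
      ∀ e ∈ G.events, ∀ f ∈ G.events,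
        (G.node e = G.node f → H.node (π e) = H.node (π f)) ∧
        (G.PDesc (G.node f) (G.node e) → H.PDesc (H.node (π f)) (H.node (π e))) ∧
        (G.Desc (G.node f) (G.node e) →
          H.Desc (H.node (π f)) (H.node (π e)) ∨ H.node (π e) = H.node (π f)) := by
  constructor
  · -- forward direction
    intro hsub e he f hf
    have main : ∀ t : ℕ → ℕ, AuxCompat H t →
        (G.node e = G.node f → t (H.node (π e)) = t (H.node (π f))) ∧
        (G.PDesc (G.node f) (G.node e) → t (H.node (π f)) < t (H.node (π e))) ∧
        (G.Desc (G.node f) (G.node e) → t (H.node (π f)) ≤ t (H.node (π e))) := by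
      intro t hct
      obtain ⟨m', h1, h2, h3, h4, h5, h6⟩ := hsub (auxSeq H t) (auxSeq_covers hH hct)
      have hts : ∀ g ∈ G.events, (m' g).ts = (t (H.node (π g)) : ℤ) := by
        intro g hg
        obtain ⟨w, hw, hwe⟩ := aux_mem_auxSeq.mp (h1 g hg)
        have hlab : H.lab w = G.lab g := by
          have h7 := h3 g hg
          rw [← hwe] at h7
          exact h7
        obtain ⟨u, -, huu⟩ := huniq g hg
        have e1 : w = u := huu w ⟨hw, hlab⟩
        have e2 : π g = u := huu (π g) ⟨(hπ g hg).1, (hπ g hg).2⟩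
        rw [← hwe, e1, ← e2]
        rfl
      refine ⟨?_, ?_, ?_⟩
      · intro hnode
        have h7 := h4 e he f hf hnode
        rw [hts e he, hts f hf] at h7
        exact_mod_cast h7
      · intro hpd
        have h7 := h6 e he f hf hpd
        rw [hts e he, hts f hf] at h7
        exact_mod_cast h7
      · intro hd
        have h7 := h5 e he f hf hd
        rw [hts e he, hts f hf] at h7
        exact_mod_cast h7
    refine ⟨?_, ?_, ?_⟩
    · intro hnode
      by_contra hne
      by_cases hd : H.Desc (H.node (π e)) (H.node (π f))
      · have h7 := (main (auxHt H) (auxHt_compat hH)).1 hnode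
        exact absurd h7 (Nat.ne_of_lt (auxHt_strict hH hd))
      · obtain ⟨t, hct, hba⟩ := aux_shift_exists hH hne hd
        have h7 := (main t hct).1 hnode
        omega
    · intro hpd
      by_contra hnp
      by_cases heq : H.node (π f) = H.node (π e)
      · have h7 := (main (auxHt H) (auxHt_compat hH)).2.1 hpd
        rw [heq] at h7
        exact lt_irrefl _ h7
      · by_cases hd : H.Desc (H.node (π f)) (H.node (π e))
        · obtain ⟨t, hct, hab⟩ := aux_collapse_exists hH hd hnp
          have h7 := (main t hct).2.1 hpd
          omega
        · obtain ⟨t, hct, hba⟩ := aux_shift_exists hH heq hd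
          have h7 := (main t hct).2.1 hpd
          omega
    · intro hd
      by_contra hcon
      push_neg at hcon
      obtain ⟨hnd, hne⟩ := hcon
      obtain ⟨t, hct, hba⟩ := aux_shift_exists hH (Ne.symm hne) hnd
      have h7 := (main t hct).2.2 hd
      omega
  · -- reverse direction
    intro hcond s hcov
    obtain ⟨m, h1, h2, h3, h4, h5, h6⟩ := hcov
    refine ⟨fun e => m (π e), ?_, ?_, ?_, ?_, ?_, ?_⟩
    · intro e he
      exact h1 _ (hπ e he).1
    · intro e he f hf hef
      apply hGdist he hf
      have h7 : (m (π e)).lab = (m (π f)).lab := by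
        simp only at hef
        rw [hef]
      rwa [h3 _ (hπ e he).1, h3 _ (hπ f hf).1, (hπ e he).2, (hπ f hf).2] at h7
    · intro e he
      rw [h3 _ (hπ e he).1, (hπ e he).2]
    · intro e he f hf hnode
      exact h4 _ (hπ e he).1 _ (hπ f hf).1 ((hcond e he f hf).1 hnode)
    · intro e he f hf hd
      rcases (hcond e he f hf).2.2 hd with hd' | heq
      · exact h5 _ (hπ e he).1 _ (hπ f hf).1 hd'
      · show (m (π f)).ts ≤ (m (π e)).ts
        exact (h4 _ (hπ f hf).1 _ (hπ e he).1 heq.symm).le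
    · intro e he f hf hpd
      exact h6 _ (hπ e he).1 _ (hπ f hf).1 ((hcond e he f hf).2.1 hpd)
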